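/- arXiv:2405.15211 — 2 statements merged into one kernel-verified Lean document; each statement's English description precedes it below -/
import Mathlib

section
/- Let C be a category with a zero object and all finite limits, and suppose given a commutative square consisting of objects A, B, C, D and morphisms α' : A → C, α : B → D, β' : A → B, β : C → D satisfying β' ≫ α = α' ≫ β. Then the fiber (kernel) of the induced morphism Fib(α') → Fib(α) (the morphism between kernels induced by β' and β) is isomorphic to the fiber of the canonical morphism A → B ×_D C, where B ×_D C is the pullback of α : B → D and β : C → D and the morphism A → B ×_D C is the one induced by β' and α'. -/
open CategoryTheory CategoryTheory.Limits

/-- In a category with a zero object and all finite limits, given a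
commutative square `β' ≫ α = α' ≫ β`, the fiber (kernel) of the induced morphism
`Fib(α') → Fib(α)` (induced by `β'` and `β`) is isomorphic to the fiber of the canonical
morphism `A → B ×_D C` induced by `β'` and `α'`. -/
theorem fib_of_kernel_map_iso_fib_of_lift_to_pullback
    {C : Type*} [Category C] [HasZeroObject C] [HasZeroMorphisms C] [HasFiniteLimits C]
    {A B X D : C} (α' : A ⟶ X) (α : B ⟶ D) (β' : A ⟶ B) (β : X ⟶ D)
    (w : β' ≫ α = α' ≫ β) :
    Nonempty (kernel (kernel.map α' α β' β w.symm) ≅ kernel (pullback.lift β' α' w)) := by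
  set km := kernel.map α' α β' β w.symm with hkm
  set pl := pullback.lift β' α' w with hpl
  have h1 : km ≫ kernel.ι α = kernel.ι α' ≫ β' := by
    simp [hkm, kernel.map]
  have hβ' : (kernel.ι km ≫ kernel.ι α') ≫ β' = 0 := by
    rw [Category.assoc, ← h1, ← Category.assoc, kernel.condition, zero_comp]
  have hf : (kernel.ι km ≫ kernel.ι α') ≫ pl = 0 := by
    apply pullback.hom_ext
    · simpa [hpl, Category.assoc, pullback.lift_fst] using hβ'
    · simp [hpl, kernel.condition, pullback.lift_snd]
  have hα' : kernel.ι pl ≫ α' = 0 := by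
    have := kernel.condition pl
    have h2 : kernel.ι pl ≫ pl ≫ pullback.snd α β = 0 := by
      rw [← Category.assoc, this, zero_comp]
    simpa [hpl, pullback.lift_snd] using h2
  have hg : kernel.lift α' (kernel.ι pl) hα' ≫ km = 0 := by
    rw [← cancel_mono (kernel.ι α)]
    rw [Category.assoc, h1, ← Category.assoc, kernel.lift_ι, zero_comp]
    have h3 : kernel.ι pl ≫ pl ≫ pullback.fst α β = 0 := by
      rw [← Category.assoc, kernel.condition, zero_comp]
    simpa [hpl, pullback.lift_fst] using h3
  refine ⟨⟨kernel.lift pl (kernel.ι km ≫ kernel.ι α') hf,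
    kernel.lift km (kernel.lift α' (kernel.ι pl) hα') hg, ?_, ?_⟩⟩
  · rw [← cancel_mono (kernel.ι km), ← cancel_mono (kernel.ι α')]
    simp
  · rw [← cancel_mono (kernel.ι pl)]
    simp
end

section
/- Let C be a category with a zero object and all finite limits, and suppose given a commutative square consisting of objects A, B, C, D and morphisms α' : A → C, α : B → D, β' : A → B, β : C → D satisfying β' ≫ α = α' ≫ β. Then the fiber (kernel) of the induced morphism Fib(β') → Fib(β) (the morphism between kernels induced by α' and α) is isomorphic to the fiber of the canonical morphism A → B ×_D C, where B ×_D C is the pullback of α : B → D and β : C → D and the morphism A → B ×_D C is the one induced by β' and α'. -/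
open CategoryTheory CategoryTheory.Limits

/-- In a category with a zero object and all finite limits, given a
commutative square `β' ≫ α = α' ≫ β`, the fiber (kernel) of the induced morphism
`Fib(β') → Fib(β)` (induced by `α'` and `α`) is isomorphic to the fiber of the canonical
morphism `A → B ×_D C` induced by `β'` and `α'`. -/
theorem fib_of_kernel_map_vert_iso_fib_of_lift_to_pullback
    {C : Type*} [Category C] [HasZeroObject C] [HasZeroMorphisms C] [HasFiniteLimits C]
    {A B X D : C} (α' : A ⟶ X) (α : B ⟶ D) (β' : A ⟶ B) (β : X ⟶ D)
    (w : β' ≫ α = α' ≫ β) :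
    Nonempty (kernel (kernel.map β' β α' α w) ≅ kernel (pullback.lift β' α' w)) := by
  have hβ' : kernel.ι (pullback.lift β' α' w) ≫ β' = 0 := by
    have h := kernel.condition (pullback.lift β' α' w) =≫ pullback.fst α β
    simpa only [Category.assoc, pullback.lift_fst, zero_comp] using h
  have hα' : kernel.ι (pullback.lift β' α' w) ≫ α' = 0 := by
    have h := kernel.condition (pullback.lift β' α' w) =≫ pullback.snd α β
    simpa only [Category.assoc, pullback.lift_snd, zero_comp] using h
  have hcomp : (kernel.ι (kernel.map β' β α' α w) ≫ kernel.ι β') ≫ pullback.lift β' α' w = 0 := by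
    apply pullback.hom_ext
    · simp only [Category.assoc, pullback.lift_fst, kernel.condition, zero_comp, comp_zero]
    · simp only [Category.assoc, pullback.lift_snd, zero_comp]
      have h : kernel.ι β' ≫ α' = kernel.map β' β α' α w ≫ kernel.ι β := by simp
      rw [h, ← Category.assoc, kernel.condition, zero_comp]
  have hg : kernel.lift β' (kernel.ι (pullback.lift β' α' w)) hβ' ≫
      kernel.map β' β α' α w = 0 := by
    rw [← cancel_mono (kernel.ι β)]
    simp [hα']
  refine ⟨{ hom := kernel.lift _ (kernel.ι _ ≫ kernel.ι β') hcomp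
            inv := kernel.lift _ (kernel.lift β' (kernel.ι _) hβ') hg
            hom_inv_id := ?_
            inv_hom_id := ?_ }⟩
  · rw [← cancel_mono (kernel.ι (kernel.map β' β α' α w)), Category.assoc, Category.id_comp,
      kernel.lift_ι, ← cancel_mono (kernel.ι β')]
    simp
  · rw [← cancel_mono (kernel.ι (pullback.lift β' α' w)), Category.assoc, Category.id_comp,
      kernel.lift_ι]
    simp
end
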